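/- Let f : ℝ^d → ℝ be μ-strongly convex and L-smooth with minimizer x*, and let 0 < α ≤ 2/(μ+L). Then for every x ∈ ℝ^d, ‖x - α∇f(x) - x*‖ ≤ (1 - ηα)‖x - x*‖, where η = μL/(μ+L). -/

import Mathlib

open RealInnerProductSpace

private lemma aux_desc {E : Type*} [NormedAddCommGroup E] [InnerProductSpace ℝ E]
    (f : E → ℝ) (g : E → E) (μ L : ℝ)
    (hsc : ∀ x y, f y ≥ f x + (inner ℝ (g x) (y - x) : ℝ) + μ / 2 * ‖y - x‖^2)
    (hsmooth : ∀ x y, ‖g y - g x‖ ≤ L * ‖y - x‖) (hμL : μ ≤ L) :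
    ∀ (n : ℕ) (a b : E), f b - f a - (inner ℝ (g a) (b - a) : ℝ) - μ / 2 * ‖b - a‖^2
      ≤ ((L - μ) / 2 + (L - μ) / 2 ^ n) * ‖b - a‖^2 := by
  intro n
  induction n with
  | zero =>
    intro a b
    have h1 := hsc b a
    have h2 : (inner ℝ (g b) (a - b) : ℝ) = -(inner ℝ (g b) (b - a) : ℝ) := by
      rw [← inner_neg_right]; congr 1; abel
    have h3 : ‖a - b‖ = ‖b - a‖ := norm_sub_rev a b
    have hCS : (inner ℝ (g b) (b - a) : ℝ) - inner ℝ (g a) (b - a) ≤ L * ‖b - a‖^2 := by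
      have := real_inner_le_norm (g b - g a) (b - a)
      have h4 := hsmooth a b
      have h5 : (inner ℝ (g b - g a) (b - a) : ℝ)
          = (inner ℝ (g b) (b - a) : ℝ) - inner ℝ (g a) (b - a) := inner_sub_left _ _ _
      nlinarith [norm_nonneg (b - a)]
    rw [h3, h2] at h1
    nlinarith [norm_nonneg (b - a), sq_nonneg ‖b - a‖]
  | succ n ih =>
    intro a b
    set m := a + (2:ℝ)⁻¹ • (b - a) with hmdef
    have hm1 : m - a = (2:ℝ)⁻¹ • (b - a) := by rw [hmdef]; abel
    have hm2 : b - m = (2:ℝ)⁻¹ • (b - a) := by rw [hmdef]; module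
    have hq : ‖b - a‖ = 2 * ‖m - a‖ := by
      rw [hm1, norm_smul]; simp
    have heq : ‖b - m‖ = ‖m - a‖ := by rw [hm1, hm2]
    have hsplit : (inner ℝ (g a) (b - a) : ℝ)
        = inner ℝ (g a) (m - a) + inner ℝ (g a) (b - m) := by
      rw [← inner_add_right]; congr 1; abel
    have hdiff : (inner ℝ (g m) (b - m) : ℝ) - inner ℝ (g a) (b - m)
        = inner ℝ (g m - g a) (m - a) := by
      rw [← inner_sub_left, hm2, ← hm1]
    have hCS : (inner ℝ (g m - g a) (m - a) : ℝ) ≤ L * ‖m - a‖^2 := by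
      have h1 := real_inner_le_norm (g m - g a) (m - a)
      have h2 := hsmooth a m
      nlinarith [norm_nonneg (m - a)]
    have ih1 := ih a m
    have ih2 := ih m b
    rw [heq] at ih2
    have hpow : ((L - μ) / 2 ^ (n+1)) * 2 = (L - μ) / 2 ^ n := by
      rw [pow_succ]; field_simp
    rw [hq, hsplit]
    nlinarith [sq_nonneg ‖m - a‖]

private lemma aux_desc_inf {E : Type*} [NormedAddCommGroup E] [InnerProductSpace ℝ E]
    (f : E → ℝ) (g : E → E) (μ L : ℝ)
    (hsc : ∀ x y, f y ≥ f x + (inner ℝ (g x) (y - x) : ℝ) + μ / 2 * ‖y - x‖^2)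
    (hsmooth : ∀ x y, ‖g y - g x‖ ≤ L * ‖y - x‖) (hμL : μ ≤ L) (a b : E) :
    f b - f a - (inner ℝ (g a) (b - a) : ℝ) - μ / 2 * ‖b - a‖^2
      ≤ (L - μ) / 2 * ‖b - a‖^2 := by
  have hlim : Filter.Tendsto (fun n : ℕ => ((L - μ) / 2 + (L - μ) / 2 ^ n) * ‖b - a‖^2)
      Filter.atTop (nhds ((L - μ) / 2 * ‖b - a‖^2)) := by
    have h0 : Filter.Tendsto (fun n : ℕ => (L - μ) * (1/2 : ℝ) ^ n) Filter.atTop (nhds 0) := by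
      simpa using (tendsto_pow_atTop_nhds_zero_of_lt_one (by norm_num : (0:ℝ) ≤ 1/2)
        (by norm_num : (1/2 : ℝ) < 1)).const_mul (L - μ)
    have h1 : Filter.Tendsto (fun n : ℕ => ((L - μ) / 2 + (L - μ) * (1/2:ℝ) ^ n) * ‖b - a‖^2)
        Filter.atTop (nhds (((L - μ) / 2 + 0) * ‖b - a‖^2)) :=
      ((tendsto_const_nhds.add h0).mul tendsto_const_nhds)
    simpa [div_pow, div_eq_mul_inv, mul_comm, mul_assoc, mul_left_comm] using h1
  exact ge_of_tendsto hlim (Filter.Eventually.of_forall fun n => by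
    simpa using aux_desc f g μ L hsc hsmooth hμL n a b)

private lemma aux_coco {E : Type*} [NormedAddCommGroup E] [InnerProductSpace ℝ E]
    (f : E → ℝ) (g : E → E) (μ L : ℝ)
    (hsc : ∀ x y, f y ≥ f x + (inner ℝ (g x) (y - x) : ℝ) + μ / 2 * ‖y - x‖^2)
    (hsmooth : ∀ x y, ‖g y - g x‖ ≤ L * ‖y - x‖) (hμL : μ < L) (a b : E) :
    (1 / (2 * (L - μ))) * ‖g b - g a - μ • (b - a)‖^2
      ≤ f b - f a - (inner ℝ (g a) (b - a) : ℝ) - μ / 2 * ‖b - a‖^2 := by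
  set c : ℝ := (L - μ)⁻¹ with hcdef
  have hLμ : (0:ℝ) < L - μ := by linarith
  have hc : (L - μ) * c = 1 := mul_inv_cancel₀ (ne_of_gt hLμ)
  set w : E := g b - g a - μ • (b - a) with hwdef
  set z : E := b - c • w with hzdef
  have hza : z - a = (b - a) - c • w := by rw [hzdef]; abel
  have hzb : z - b = -(c • w) := by rw [hzdef]; abel
  have H1 := hsc a z
  have H2 := aux_desc_inf f g μ L hsc hsmooth (le_of_lt hμL) b z
  have e1 : ‖z - b‖^2 = c^2 * ‖w‖^2 := by
    rw [hzb, norm_neg, norm_smul, mul_pow, Real.norm_eq_abs, sq_abs]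
  have e2 : ‖z - a‖^2 = ‖b - a‖^2 - 2 * (c * (inner ℝ (b - a) w : ℝ)) + c^2 * ‖w‖^2 := by
    rw [hza, norm_sub_sq_real, real_inner_smul_right, norm_smul, mul_pow,
      Real.norm_eq_abs, sq_abs]
  have e3 : (inner ℝ (g a) (z - a) : ℝ) = inner ℝ (g a) (b - a) - c * inner ℝ (g a) w := by
    rw [hza, inner_sub_right, real_inner_smul_right]
  have e4 : (inner ℝ (g b) (z - b) : ℝ) = -(c * inner ℝ (g b) w) := by
    rw [hzb, inner_neg_right, real_inner_smul_right]
  have e5 : (inner ℝ (g b) w : ℝ) - inner ℝ (g a) w = ‖w‖^2 + μ * (inner ℝ (b - a) w : ℝ) := by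
    have h6 : (inner ℝ (g b) w : ℝ) - inner ℝ (g a) w = inner ℝ (g b - g a) w :=
      (inner_sub_left _ _ _).symm
    rw [h6]
    have hgba : g b - g a = w + μ • (b - a) := by rw [hwdef]; abel
    rw [hgba, inner_add_left, real_inner_smul_left, real_inner_self_eq_norm_sq,
      real_inner_comm]
  rw [e1, e4] at H2
  rw [e2, e3] at H1
  have hc2 : (L - μ) * c^2 = c := by rw [sq, ← mul_assoc, hc, one_mul]
  have e5c : c * (inner ℝ (g b) w : ℝ) - c * (inner ℝ (g a) w : ℝ)
      = c * ‖w‖^2 + c * (μ * (inner ℝ (b - a) w : ℝ)) := by linear_combination c * e5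
  have hc2W : (L - μ) * c^2 * ‖w‖^2 = c * ‖w‖^2 := by linear_combination hc2 * ‖w‖^2
  have h3 : (1:ℝ) / (2 * (L - μ)) = c / 2 := by rw [hcdef]; field_simp
  rw [h3]
  linarith [H1, H2, e5c, hc2W]
set_option maxHeartbeats 1000000 in
theorem gradient_step_contraction
    (d : ℕ) (f : EuclideanSpace ℝ (Fin d) → ℝ)
    (g : EuclideanSpace ℝ (Fin d) → EuclideanSpace ℝ (Fin d))
    (μ L α : ℝ) (hμ : 0 < μ) (hL : 0 < L)
    (hsc : ∀ x y, f y ≥ f x + (inner ℝ (g x) (y - x) : ℝ) + μ / 2 * ‖y - x‖^2)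
    (hsmooth : ∀ x y, ‖g y - g x‖ ≤ L * ‖y - x‖)
    (xstar : EuclideanSpace ℝ (Fin d))
    (hmin : ∀ y, f xstar ≤ f y) (hg0 : g xstar = 0)
    (hα : 0 < α) (hα2 : α ≤ 2 / (μ + L))
    (x : EuclideanSpace ℝ (Fin d)) :
    ‖x - α • g x - xstar‖ ≤ (1 - (μ * L / (μ + L)) * α) * ‖x - xstar‖ := by
  have hS : (0:ℝ) < μ + L := by linarith
  set η : ℝ := μ * L / (μ + L) with hηdef
  set r : ℝ := ‖x - xstar‖ with hrdef
  set s : ℝ := ‖g x‖ with hsdef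
  set cc : ℝ := (inner ℝ (g x) (x - xstar) : ℝ) with hccdef
  set t : ℝ := (μ + L)⁻¹ with htdef
  clear_value η r s cc t
  have ht : t * (μ + L) = 1 := by rw [htdef]; exact inv_mul_cancel₀ (ne_of_gt hS)
  have ht0 : 0 ≤ t := by rw [htdef]; positivity
  have hη : η * (μ + L) = μ * L := by
    rw [hηdef]; exact div_mul_cancel₀ _ (ne_of_gt hS)
  have hαS : α * (μ + L) ≤ 2 := by
    rw [← le_div_iff₀ hS]; exact hα2
  have hα2t : α ≤ 2 * t := by
    have h := mul_le_mul_of_nonneg_right hαS ht0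
    rwa [mul_assoc, mul_comm (μ + L) t, ht, mul_one] at h
  have hnsym : ‖xstar - x‖ = r := by rw [hrdef]; exact norm_sub_rev xstar x
  have hinegg : (inner ℝ (g x) (xstar - x) : ℝ) = -cc := by
    rw [hccdef, ← inner_neg_right]; congr 1; abel
  have hLip : s ≤ L * r := by
    rw [hsdef, hrdef]
    have h := hsmooth xstar x
    rwa [hg0, sub_zero] at h
  have hmono : μ * r^2 ≤ cc := by
    have h1 := hsc xstar x
    have h2 := hsc x xstar
    rw [hg0, inner_zero_left, ← hrdef] at h1
    rw [hinegg, hnsym] at h2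
    linarith
  have hr0 : 0 ≤ r := hrdef ▸ norm_nonneg _
  have hs0 : 0 ≤ s := hsdef ▸ norm_nonneg _
  -- key inequality: μ*L*r^2 + s^2 ≤ cc*(μ+L)
  have keyS : μ * L * r^2 + s^2 ≤ cc * (μ + L) := by
    by_cases hcase : μ < L
    · have C1 := aux_coco f g μ L hsc hsmooth hcase xstar x
      have C2 := aux_coco f g μ L hsc hsmooth hcase x xstar
      have hw2 : g xstar - g x - μ • (xstar - x) = -(g x - g xstar - μ • (x - xstar)) := by
        module
      rw [hw2, norm_neg] at C2
      rw [hg0] at C1 C2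
      rw [inner_zero_left, ← hrdef] at C1
      rw [hinegg, hnsym] at C2
      set w : EuclideanSpace ℝ (Fin d) := g x - 0 - μ • (x - xstar) with hwdef
      clear_value w
      have eW : ‖w‖^2 = s^2 - 2 * (μ * cc) + μ^2 * r^2 := by
        have hw' : w = g x - μ • (x - xstar) := by rw [hwdef]; abel
        rw [hw', norm_sub_sq_real, real_inner_smul_right, norm_smul, mul_pow,
          Real.norm_eq_abs, sq_abs, ← hccdef, ← hsdef, ← hrdef]
      have hLμ : (0:ℝ) < L - μ := by linarith
      have hne : L - μ ≠ 0 := ne_of_gt hLμ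
      have heqW : 2 * ((1 / (2 * (L - μ))) * ‖w‖^2) = (L - μ)⁻¹ * ‖w‖^2 := by
        field_simp
      have hsum : (L - μ)⁻¹ * ‖w‖^2 ≤ cc - μ * r^2 := by
        linarith [C1, C2, heqW]
      have hW' : ‖w‖^2 ≤ (L - μ) * (cc - μ * r^2) := by
        have h := mul_le_mul_of_nonneg_left hsum (le_of_lt hLμ)
        rwa [← mul_assoc, mul_inv_cancel₀ hne, one_mul] at h
      have hexp2 : (L - μ) * (cc - μ * r^2)
          = L * cc - μ * cc - L * (μ * r^2) + μ * (μ * r^2) := by ring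
      rw [hexp2] at hW'
      have eW2 : s^2 = ‖w‖^2 + 2 * (μ * cc) - μ^2 * r^2 := by linarith [eW]
      linarith [hW', eW2]
    · push_neg at hcase
      have hCS : cc ≤ s * r := by
        rw [hccdef, hsdef, hrdef]; exact real_inner_le_norm _ _
      nlinarith [hmono, hCS, hLip, mul_le_mul_of_nonneg_left hmono hL.le,
        mul_le_mul_of_nonneg_left hmono hμ.le, sq_nonneg (L*r - s),
        mul_nonneg (mul_nonneg hr0 hr0) (mul_nonneg hμ.le (sub_nonneg.2 hcase)),
        mul_nonneg (mul_nonneg hr0 hr0) (mul_nonneg hL.le (sub_nonneg.2 hcase))]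
  have hηt : η = μ * L * t := by rw [hηdef, htdef, div_eq_mul_inv]
  have hkey : η * r^2 + t * s^2 ≤ cc := by
    have h := mul_le_mul_of_nonneg_left keyS ht0
    have h2 : t * (cc * (μ + L)) = cc := by linear_combination cc * ht
    calc η * r^2 + t * s^2 = t * (μ * L * r^2 + s^2) := by rw [hηt]; ring
      _ ≤ t * (cc * (μ + L)) := h
      _ = cc := h2
  have hexp : ‖x - α • g x - xstar‖^2 = r^2 - 2 * (α * cc) + α^2 * s^2 := by
    have h1 : x - α • g x - xstar = (x - xstar) - α • g x := by abel
    rw [h1, norm_sub_sq_real, real_inner_smul_right, norm_smul, mul_pow,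
      Real.norm_eq_abs, sq_abs, ← hrdef, ← hsdef, real_inner_comm, ← hccdef]
  have hη0 : 0 ≤ η := by rw [hηt]; positivity
  have hRnn : 0 ≤ 1 - η * α := by
    have h1 : η * α ≤ η * (2 * t) := mul_le_mul_of_nonneg_left hα2t hη0
    have h2 : η * (2 * t) = 2 * (μ * L) * t^2 := by rw [hηt]; ring
    have h4 : t^2 * (μ + L)^2 = 1 := by
      have := congrArg (fun y => y^2) ht
      simpa [mul_pow] using this
    have hnn1 : 0 ≤ t^2 * μ^2 := by positivity
    have hnn2 : 0 ≤ t^2 * L^2 := by positivity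
    nlinarith [h1, h2, h4, hnn1, hnn2]
  have hsq : ‖x - α • g x - xstar‖^2 ≤ ((1 - η * α) * r)^2 := by
    rw [hexp]
    have h5 : 0 ≤ α * (cc - (η * r^2 + t * s^2)) :=
      mul_nonneg hα.le (sub_nonneg.2 hkey)
    have h6 : 0 ≤ α * s^2 * (2 * t - α) :=
      mul_nonneg (mul_nonneg hα.le (sq_nonneg s)) (sub_nonneg.2 hα2t)
    have h7 : 0 ≤ (η * α * r)^2 := sq_nonneg _
    nlinarith [h5, h6, h7]
  have hfin := Real.sqrt_le_sqrt hsq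
  rwa [Real.sqrt_sq (norm_nonneg _),
    Real.sqrt_sq (mul_nonneg hRnn hr0)] at hfin
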